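/- For every positive integer n and every real c > 0, 1/(n+4+c)² ≤ E_{χ²_{n+4}}[1/(u+c)²] ≤ 1/(n+c)². -/

import Mathlib

open MeasureTheory ProbabilityTheory

/-- The chi-square distribution with `m` degrees of freedom: the Gamma distribution
with shape `m/2` and rate `1/2`. -/
noncomputable def chiSq (m : ℕ) : Measure ℝ := gammaMeasure ((m : ℝ) / 2) (1 / 2)

/-- Expectation of `f` under the chi-square distribution with `m` degrees of freedom. -/
noncomputable def chiSqExp (m : ℕ) (f : ℝ → ℝ) : ℝ := ∫ u, f u ∂(chiSq m)

section aux
open Real Set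
open scoped ENNReal NNReal

lemma gamma_ae_pos {a r : ℝ} : ∀ᵐ x ∂(gammaMeasure a r), 0 < x := by
  rw [ae_iff]
  have hs : {x : ℝ | ¬ 0 < x} = Iic 0 := by ext x; simp
  rw [hs, gammaMeasure, withDensity_apply _ measurableSet_Iic,
    lintegral_Iic_eq_lintegral_Iio_add_Icc _ le_rfl]
  rw [lintegral_gammaPDF_of_nonpos le_rfl]
  rw [show Icc (0:ℝ) 0 = {0} by simp]
  rw [setLIntegral_measure_zero _ _ (by simp)]
  simp

lemma gamma_moment {a r p : ℝ} (ha : 0 < a) (hr : 0 < r) (hap : 0 < a + p)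
    (f : ℝ → ℝ) (hfx : ∀ x : ℝ, 0 < x → f x = x ^ p) :
    Integrable f (gammaMeasure a r) ∧
      ∫ x, f x ∂(gammaMeasure a r) = Gamma (a + p) / (Gamma a * r ^ p) := by
  have hGa : (0:ℝ) < Gamma a := Gamma_pos_of_pos ha
  have hpdf_meas := measurable_gammaPDFReal a r
  have hnn : ∀ x, 0 ≤ gammaPDFReal a r x := gammaPDFReal_nonneg ha hr
  have hρ : gammaMeasure a r = volume.withDensity
      (fun x => (((gammaPDFReal a r x).toNNReal : ℝ≥0) : ℝ≥0∞)) := rfl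
  have hmeas_nn : Measurable fun x => (gammaPDFReal a r x).toNNReal :=
    hpdf_meas.real_toNNReal
  have hsmul : (fun x => (gammaPDFReal a r x).toNNReal • f x)
      = fun x => gammaPDFReal a r x * f x := by
    funext x
    rw [NNReal.smul_def, smul_eq_mul, Real.coe_toNNReal _ (hnn x)]
  have hae : (fun x => gammaPDFReal a r x * f x) =ᵐ[(volume : Measure ℝ)]
      (Ioi (0:ℝ)).indicator
        (fun x => r ^ a / Gamma a * (x ^ (a + p - 1) * exp (-(r * x)))) := by
    have hne : ∀ᵐ (x:ℝ) ∂volume, x ≠ 0 := by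
      rw [ae_iff]
      simpa using (by simp : (volume : Measure ℝ) {0} = 0)
    filter_upwards [hne] with x hx
    rcases lt_or_gt_of_ne hx with hneg | hpos
    · rw [indicator_of_notMem (by simpa using hneg.le)]
      rw [gammaPDFReal, if_neg (not_le.mpr hneg), zero_mul]
    · rw [indicator_of_mem (mem_Ioi.mpr hpos), gammaPDFReal, if_pos hpos.le, hfx x hpos]
      rw [show a + p - 1 = (a - 1) + p by ring, Real.rpow_add hpos]
      ring
  have hint : IntegrableOn (fun x => x ^ (a + p - 1) * exp (-(r * x))) (Ioi 0) := by
    have h := integrableOn_rpow_mul_exp_neg_mul_rpow (s := a + p - 1) (p := 1) (b := r)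
      (by linarith) one_pos hr
    apply h.congr_fun _ measurableSet_Ioi
    intro x hx
    simp only [Real.rpow_one, neg_mul]
  have hint2 : Integrable ((Ioi (0:ℝ)).indicator
      (fun x => r ^ a / Gamma a * (x ^ (a + p - 1) * exp (-(r * x))))) volume := by
    rw [integrable_indicator_iff measurableSet_Ioi]
    exact hint.const_mul _
  have hg : Integrable (fun x => gammaPDFReal a r x * f x) volume :=
    (integrable_congr hae).mpr hint2
  constructor
  · rw [hρ, integrable_withDensity_iff_integrable_smul hmeas_nn]
    rwa [hsmul]
  · rw [hρ, integral_withDensity_eq_integral_smul hmeas_nn, hsmul,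
      integral_congr_ae hae, integral_indicator measurableSet_Ioi,
      integral_const_mul, integral_rpow_mul_exp_neg_mul_Ioi hap hr]
    have hra : (0:ℝ) < r ^ a := rpow_pos_of_pos hr a
    have hrp : (0:ℝ) < r ^ p := rpow_pos_of_pos hr p
    have h1 : ((1:ℝ)/r) ^ (a+p) = (r ^ a * r ^ p)⁻¹ := by
      rw [one_div, ← Real.rpow_add hr, Real.inv_rpow hr.le]
    rw [h1]
    field_simp

end aux

set_option maxHeartbeats 1000000

theorem stmt_3 (n : ℕ) (hn : 1 ≤ n) (c : ℝ) (hc : 0 < c) :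
    1 / ((n : ℝ) + 4 + c) ^ 2 ≤ chiSqExp (n + 4) (fun u => 1 / (u + c) ^ 2) ∧
    chiSqExp (n + 4) (fun u => 1 / (u + c) ^ 2) ≤ 1 / ((n : ℝ) + c) ^ 2 := by
  have hn1 : (1:ℝ) ≤ (n:ℝ) := by exact_mod_cast hn
  set nn : ℝ := (n:ℝ) with hnn
  have hnpos : 0 < nn := by linarith
  set a : ℝ := (nn + 4) / 2 with hadef
  have ha : 0 < a := by simp only [hadef]; linarith
  have hGa : (0:ℝ) < Real.Gamma a := Real.Gamma_pos_of_pos ha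
  have hr : (0:ℝ) < 1/2 := by norm_num
  set μ : Measure ℝ := gammaMeasure a (1/2) with hμ
  have hμeq : chiSq (n + 4) = μ := by
    rw [chiSq, hμ, hadef]
    norm_num [hnn]
  haveI hP : IsProbabilityMeasure μ := isProbabilityMeasure_gammaMeasure ha hr
  set N : ℝ := nn + 4 with hNdef
  -- Gamma recurrences
  have ha1 : (0:ℝ) < a - 1 := by simp only [hadef]; linarith
  have ha2 : (0:ℝ) < a - 2 := by simp only [hadef]; linarith
  have hG1 : Real.Gamma a = (a - 1) * Real.Gamma (a - 1) := by
    have h := Real.Gamma_add_one (s := a - 1) ha1.ne'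
    rw [show a - 1 + 1 = a by ring] at h
    exact h
  have hG2 : Real.Gamma (a - 1) = (a - 2) * Real.Gamma (a - 2) := by
    have h := Real.Gamma_add_one (s := a - 2) ha2.ne'
    rw [show a - 2 + 1 = a - 1 by ring] at h
    exact h
  have hGa1 : (0:ℝ) < Real.Gamma (a - 1) := Real.Gamma_pos_of_pos ha1
  have hGa2 : (0:ℝ) < Real.Gamma (a - 2) := Real.Gamma_pos_of_pos ha2
  -- first moment
  obtain ⟨hI1, hV1⟩ := gamma_moment (p := 1) ha hr (by linarith)
    (fun x => x) (fun x hx => (Real.rpow_one x).symm)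
  have hV1' : ∫ x, x ∂μ = N := by
    rw [hV1, Real.Gamma_add_one ha.ne', Real.rpow_one]
    field_simp
    simp only [hNdef, hadef]; ring
  -- inverse moment
  obtain ⟨hIinv, hVinv⟩ := gamma_moment (p := -1) ha hr (by simp only [hadef, hNdef]; linarith)
    (fun x => x⁻¹) (fun x hx => by rw [Real.rpow_neg_one])
  have hVinv' : ∫ x, x⁻¹ ∂μ = 1 / (nn + 2) := by
    rw [hVinv, show a + (-1) = a - 1 by ring, hG1]
    have h2 : ((1:ℝ)/2) ^ (-1 : ℝ) = 2 := by
      rw [Real.rpow_neg_one]; norm_num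
    rw [h2]
    rw [show (a - 1) * Real.Gamma (a-1) * 2 = Real.Gamma (a-1) * (2*(a-1)) by ring]
    rw [show 2 * (a - 1) = nn + 2 by simp only [hadef, hNdef]; ring]
    rw [div_mul_eq_div_div, div_self hGa1.ne']
  -- inverse second moment
  obtain ⟨hIinv2, hVinv2⟩ := gamma_moment (p := -2) ha hr (by simp only [hadef, hNdef]; linarith)
    (fun x => (x^2)⁻¹) (fun x hx => by
      rw [show (-2:ℝ) = -(2:ℕ) by norm_num, Real.rpow_neg hx.le, Real.rpow_natCast])
  have hVinv2' : ∫ x, (x^2)⁻¹ ∂μ = 1 / ((nn + 2) * nn) := by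
    rw [hVinv2, show a + (-2) = a - 2 by ring, hG1, hG2]
    have h2 : ((1:ℝ)/2) ^ (-2 : ℝ) = 4 := by
      rw [show (-2:ℝ) = ((-2:ℤ):ℝ) by norm_num, Real.rpow_intCast]; norm_num
    rw [h2]
    rw [show (a-1) * ((a-2) * Real.Gamma (a-2)) * 4 = Real.Gamma (a-2) * ((2*(a-1)) * (2*(a-2))) by ring]
    rw [show 2 * (a - 1) = nn + 2 by simp only [hadef, hNdef]; ring,
        show 2 * (a - 2) = nn by simp only [hadef, hNdef]; ring]
    rw [div_mul_eq_div_div, div_self hGa2.ne']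
  -- ae positivity
  have hpos : ∀ᵐ x ∂μ, 0 < x := gamma_ae_pos
  -- integrability of the target function
  have hFmeas : AEStronglyMeasurable (fun u : ℝ => 1/(u+c)^2) μ := by
    apply Measurable.aestronglyMeasurable
    fun_prop
  have hF : Integrable (fun u : ℝ => 1/(u+c)^2) μ := by
    apply Integrable.mono' (integrable_const (1/c^2)) hFmeas
    filter_upwards [hpos] with x hx
    rw [Real.norm_eq_abs, abs_of_nonneg (by positivity)]
    apply one_div_le_one_div_of_le (by positivity)
    nlinarith
  -- clean integrable terms
  have hIxN : Integrable (fun x => x - N) μ := by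
    exact hI1.sub (integrable_const N)
  have hIxN2 : Integrable (fun x => 2/(N+c)^3 * (x - N)) μ := hIxN.const_mul _
  have hIlow : Integrable (fun x => 1/(N+c)^2 - 2/(N+c)^3 * (x - N)) μ := by
    exact (integrable_const _).sub hIxN2
  have hIinvC : Integrable (fun x : ℝ => (2*nn^2/(nn+c)^3) * x⁻¹) μ := hIinv.const_mul _
  have hIinv2C : Integrable (fun x : ℝ => (2*nn^3/(nn+c)^3) * (x^2)⁻¹) μ := hIinv2.const_mul _
  have hIupA : Integrable (fun x : ℝ => 1/(nn+c)^2 - (2*nn^2/(nn+c)^3) * x⁻¹) μ := by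
    exact (integrable_const _).sub hIinvC
  have hIup : Integrable
      (fun x : ℝ => 1/(nn+c)^2 - (2*nn^2/(nn+c)^3) * x⁻¹ + (2*nn^3/(nn+c)^3) * (x^2)⁻¹) μ := by
    exact hIupA.add hIinv2C
  have hμ1 : μ.real Set.univ = 1 := by rw [measureReal_def, measure_univ, ENNReal.toReal_one]
  rw [chiSqExp, hμeq]
  constructor
  · -- lower bound
    have hNc : 0 < N + c := by simp only [hNdef]; linarith
    calc 1 / ((n:ℝ) + 4 + c) ^ 2
        = ∫ x, (1/(N+c)^2 - 2/(N+c)^3 * (x - N)) ∂μ := by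
          rw [integral_sub (integrable_const _) hIxN2, integral_const,
            integral_const_mul, integral_sub hI1 (integrable_const N), hV1',
            integral_const, hμ1]
          simp only [one_smul, smul_eq_mul, one_mul, sub_self, mul_zero, sub_zero, hNdef, hnn]
      _ ≤ ∫ x, 1/(x+c)^2 ∂μ := by
          apply integral_mono_ae hIlow hF
          filter_upwards [hpos] with x hx
          have hs : 0 < x + c := by linarith
          rw [← sub_nonneg]
          have key : 1/(x+c)^2 - (1/(N+c)^2 - 2/(N+c)^3 * (x - N))
              = ((N+c)-(x+c))^2 * ((N+c)+2*(x+c)) / ((x+c)^2*(N+c)^3) := by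
            field_simp
            ring
          rw [key]
          positivity
  · -- upper bound
    have hnc : 0 < nn + c := by linarith
    calc ∫ x, 1/(x+c)^2 ∂μ
        ≤ ∫ x, (1/(nn+c)^2 - (2*nn^2/(nn+c)^3) * x⁻¹ + (2*nn^3/(nn+c)^3) * (x^2)⁻¹) ∂μ := by
          apply integral_mono_ae hF hIup
          filter_upwards [hpos] with x hx
          have hs : 0 < x + c := by linarith
          rw [← sub_nonneg]
          have key : (1/(nn+c)^2 - (2*nn^2/(nn+c)^3) * x⁻¹ + (2*nn^3/(nn+c)^3) * (x^2)⁻¹)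
                - 1/(x+c)^2
              = (x-nn)^2 * ((nn+c)*x^2 + (4*c*nn+2*c^2)*x + 2*c^2*nn)
                / (x^2*(x+c)^2*(nn+c)^3) := by
            field_simp
            ring
          rw [key]
          positivity
      _ = 1 / (nn + c) ^ 2 := by
          rw [integral_add hIupA hIinv2C,
            integral_sub (integrable_const _) hIinvC, integral_const,
            integral_const_mul, integral_const_mul, hVinv', hVinv2', hμ1]
          simp only [one_smul, smul_eq_mul, one_mul]
          have h2 : nn + 2 ≠ 0 := by linarith
          have h0 : nn ≠ 0 := hnpos.ne'
          have h3 : nn + c ≠ 0 := hnc.ne'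
          field_simp
          ring
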